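/- Let q : ℝ → ℝ be a C¹ function with |q'(x)| < 1 for all x, q(0) = 0, and let a ∈ ℝ. For t > 0 define Ψ(t, s) = (a/2)·λ{τ ∈ [0, t] : s − (t − τ) ≤ q(τ) ≤ s + (t − τ)}, where λ denotes Lebesgue measure. Then Ψ(t, s) = 0 if s < −t or s > t; Ψ(t, s) = (a/2)·T₊(s+t) if −t < s < q(t), where T₊(s+t) is the unique τ ∈ (0,t) with q(τ) + τ = s + t; and Ψ(t, s) = (a/2)·T₋(s−t) if q(t) < s < t, where T₋(s−t) is the unique τ ∈ (0,t) with q(τ) − τ = s − t. -/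

import Mathlib

open Real MeasureTheory

/-- The Duhamel solution `Ψ(t,s)` of the 1D wave equation sourced by a point charge of
charge `a` moving along a subluminal trajectory `q`: `(a/2)` times the Lebesgue measure of
the set of times `τ ∈ [0, t]` at which the particle lies inside the backward light cone
of the event `(t, s)`. -/
noncomputable def Psi (a : ℝ) (q : ℝ → ℝ) (t s : ℝ) : ℝ :=
  (a / 2) *
    (volume {τ : ℝ | τ ∈ Set.Icc 0 t ∧ s - (t - τ) ≤ q τ ∧ q τ ≤ s + (t - τ)}).toReal

/-- Evaluation of the Duhamel solution `Ψ`: it vanishes outside the light cone of the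
origin, equals `(a/2)·T₊(s+t)` to the left of the particle, and `(a/2)·T₋(s−t)` to its
right, where `T₊(s+t)`, `T₋(s−t)` are the retarded times. -/
theorem Psi_eval
    (q : ℝ → ℝ) (hq : ContDiff ℝ 1 q) (hq' : ∀ x, |deriv q x| < 1) (hq0 : q 0 = 0)
    (a : ℝ) (t : ℝ) (ht : 0 < t) :
    (∀ s : ℝ, s < -t ∨ t < s → Psi a q t s = 0) ∧
    (∀ s : ℝ, -t < s → s < q t →
      ∀ τ ∈ Set.Ioo (0 : ℝ) t, q τ + τ = s + t → Psi a q t s = (a / 2) * τ) ∧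
    (∀ s : ℝ, q t < s → s < t →
      ∀ τ ∈ Set.Ioo (0 : ℝ) t, q τ - τ = s - t → Psi a q t s = (a / 2) * τ) := by
  have hdq : Differentiable ℝ q := hq.differentiable one_ne_zero
  have hf : StrictMono (fun τ => q τ + τ) := by
    apply strictMono_of_deriv_pos
    intro x
    have h : HasDerivAt (fun τ => q τ + τ) (deriv q x + 1) x :=
      ((hdq x).hasDerivAt).add (hasDerivAt_id x)
    rw [h.deriv]
    have := (abs_lt.mp (hq' x)).1
    linarith
  have hg : StrictAnti (fun τ => q τ - τ) := by
    apply strictAnti_of_deriv_neg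
    intro x
    have h : HasDerivAt (fun τ => q τ - τ) (deriv q x - 1) x :=
      ((hdq x).hasDerivAt).sub (hasDerivAt_id x)
    rw [h.deriv]
    have := (abs_lt.mp (hq' x)).2
    linarith
  refine ⟨?_, ?_, ?_⟩
  · intro s hs
    have hempty :
        {τ : ℝ | τ ∈ Set.Icc 0 t ∧ s - (t - τ) ≤ q τ ∧ q τ ≤ s + (t - τ)} = ∅ := by
      ext τ
      simp only [Set.mem_setOf_eq, Set.mem_Icc, Set.mem_empty_iff_false, iff_false, not_and]
      rintro ⟨h0, hτt⟩ h1 h2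
      rcases hs with hs | hs
      · have h3 : q 0 + 0 ≤ q τ + τ := hf.monotone h0
        rw [hq0] at h3
        linarith
      · have h3 : q τ - τ ≤ q 0 - 0 := hg.antitone h0
        rw [hq0] at h3
        linarith
    rw [Psi, hempty]
    simp
  · intro s hs1 hs2 τ hτ hroot
    have hIcc :
        {x : ℝ | x ∈ Set.Icc 0 t ∧ s - (t - x) ≤ q x ∧ q x ≤ s + (t - x)} = Set.Icc 0 τ := by
      ext x
      simp only [Set.mem_setOf_eq, Set.mem_Icc]
      constructor
      · rintro ⟨⟨h0, hxt⟩, h1, h2⟩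
        refine ⟨h0, ?_⟩
        have h3 : q x + x ≤ q τ + τ := by linarith
        exact hf.le_iff_le.mp h3
      · rintro ⟨h0, hxτ⟩
        refine ⟨⟨h0, hxτ.trans hτ.2.le⟩, ?_, ?_⟩
        · have h3 : q τ - τ ≤ q x - x := hg.antitone hxτ
          have hτt : τ ≤ t := hτ.2.le
          linarith
        · have h4 : q x + x ≤ q τ + τ := hf.monotone hxτ
          linarith
    rw [Psi, hIcc, Real.volume_Icc, ENNReal.toReal_ofReal (by linarith [hτ.1])]
    ring_nf
  · intro s hs1 hs2 τ hτ hroot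
    have hIcc :
        {x : ℝ | x ∈ Set.Icc 0 t ∧ s - (t - x) ≤ q x ∧ q x ≤ s + (t - x)} = Set.Icc 0 τ := by
      ext x
      simp only [Set.mem_setOf_eq, Set.mem_Icc]
      constructor
      · rintro ⟨⟨h0, hxt⟩, h1, h2⟩
        refine ⟨h0, ?_⟩
        have h3 : q τ - τ ≤ q x - x := by linarith
        exact hg.le_iff_ge.mp h3
      · rintro ⟨h0, hxτ⟩
        refine ⟨⟨h0, hxτ.trans hτ.2.le⟩, ?_, ?_⟩
        · have h3 : q τ - τ ≤ q x - x := hg.antitone hxτ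
          linarith
        · have h4 : q x + x ≤ q τ + τ := hf.monotone hxτ
          have hτt : τ ≤ t := hτ.2.le
          linarith
    rw [Psi, hIcc, Real.volume_Icc, ENNReal.toReal_ofReal (by linarith [hτ.1])]
    ring_nf
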